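/- Let F : C ⥤ C be an endofunctor of a category C with an initial algebra a : F A ⟶ A and a final coalgebra z : Z ⟶ F Z. If h : Z ⟶ A satisfies h = a ∘ F h ∘ z, then h is an isomorphism; moreover its inverse is the unique coalgebra morphism k : (A, a⁻¹) ⟶ (Z, z), where a is invertible by Lambek's lemma. -/
import Mathlib


open CategoryTheory

universe v u

/-- `(A, a)` is an initial algebra for the endofunctor `G`: for every algebra
`(Y, b)` there is a unique `k : A ⟶ Y` with `k ∘ a = b ∘ G k`. -/
def IsInitialAlgebra {C : Type u} [Category.{v} C] (G : C ⥤ C)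
    (A : C) (a : G.obj A ⟶ A) : Prop :=
  ∀ (Y : C) (b : G.obj Y ⟶ Y), ∃! k : A ⟶ Y, a ≫ k = G.map k ≫ b

/-- `(Z, z)` is a final coalgebra for the endofunctor `G`: for every coalgebra
`(Y, d)` there is a unique `k : Y ⟶ Z` with `z ∘ k = G k ∘ d`. -/
def IsFinalCoalgebra {C : Type u} [Category.{v} C] (G : C ⥤ C)
    (Z : C) (z : Z ⟶ G.obj Z) : Prop :=
  ∀ (Y : C) (d : Y ⟶ G.obj Y), ∃! k : Y ⟶ Z, k ≫ z = d ≫ G.map k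

/-- Let `a : G A ⟶ A` be an initial algebra and `z : Z ⟶ G Z` a final
coalgebra for an endofunctor `G`. If `h : Z ⟶ A` satisfies
`h = a ∘ G h ∘ z`, then `h` is an isomorphism, and its inverse is the unique
coalgebra morphism `k : (A, a⁻¹) ⟶ (Z, z)` (where `a⁻¹` is any inverse of
`a`; `a` is invertible by Lambek's lemma). -/
theorem fixpoint_coalgebra_to_algebra_iso {C : Type u} [Category.{v} C]
    (G : C ⥤ C) (A : C) (a : G.obj A ⟶ A) (hA : IsInitialAlgebra G A a)
    (Z : C) (z : Z ⟶ G.obj Z) (hZ : IsFinalCoalgebra G Z z)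
    (h : Z ⟶ A) (hh : h = z ≫ G.map h ≫ a) :
    IsIso h ∧
      ∀ a' : A ⟶ G.obj A, a ≫ a' = 𝟙 (G.obj A) → a' ≫ a = 𝟙 A →
        ∀ k : A ⟶ Z, k ≫ z = a' ≫ G.map k →
          h ≫ k = 𝟙 Z ∧ k ≫ h = 𝟙 A := by
  have uniqA : ∀ (f g : A ⟶ A), a ≫ f = G.map f ≫ a → a ≫ g = G.map g ≫ a → f = g := by
    intro f g hf hg
    obtain ⟨m, -, hm⟩ := hA A a
    exact (hm f hf).trans (hm g hg).symm
  have uniqZ : ∀ (f g : Z ⟶ Z), f ≫ z = z ≫ G.map f → g ≫ z = z ≫ G.map g → f = g := by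
    intro f g hf hg
    obtain ⟨m, -, hm⟩ := hZ Z z
    exact (hm f hf).trans (hm g hg).symm
  -- Lambek for the initial algebra: a has inverse i
  obtain ⟨i, hi, -⟩ := hA (G.obj A) (G.map a)
  have hia : i ≫ a = 𝟙 A := by
    refine uniqA _ _ ?_ (by simp)
    rw [G.map_comp, ← Category.assoc, hi]
  have hai : a ≫ i = 𝟙 (G.obj A) := by
    rw [hi, ← G.map_comp, hia, G.map_id]
  -- Lambek for the final coalgebra: z has inverse j
  obtain ⟨j, hj, -⟩ := hZ (G.obj Z) (G.map z)
  have hzj : z ≫ j = 𝟙 Z := by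
    refine uniqZ _ _ ?_ (by simp)
    rw [G.map_comp, Category.assoc, hj]
  have hjz : j ≫ z = 𝟙 (G.obj Z) := by
    rw [hj, ← G.map_comp, hzj, G.map_id]
  -- canonical algebra morphism k₀ : A ⟶ Z into (Z, j)
  obtain ⟨k₀, hk₀, hk₀u⟩ := hA Z j
  -- any coalgebra morphism condition forces k = k₀
  have key : ∀ a' : A ⟶ G.obj A, a ≫ a' = 𝟙 (G.obj A) →
      ∀ k : A ⟶ Z, k ≫ z = a' ≫ G.map k → k = k₀ := by
    intro a' haa' k hk
    refine hk₀u k ?_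
    have h2 : a ≫ k ≫ z = G.map k := by
      rw [hk, ← Category.assoc, haa', Category.id_comp]
    have h3 := congrArg (· ≫ j) h2
    simpa [hzj] using h3
  have hk₀z : k₀ ≫ z = i ≫ G.map k₀ := by
    have e1 : k₀ = i ≫ G.map k₀ ≫ j := by
      rw [← hk₀, ← Category.assoc, hia, Category.id_comp]
    conv_lhs => rw [e1]
    simp [hjz]
  have hhi : h ≫ i = z ≫ G.map h := by
    conv_lhs => rw [hh]
    rw [Category.assoc, Category.assoc, hai, Category.comp_id]
  have hhk : h ≫ k₀ = 𝟙 Z := by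
    refine uniqZ _ _ ?_ (by simp)
    rw [Category.assoc, hk₀z, ← Category.assoc, hhi, Category.assoc, ← G.map_comp]
  have hjh : j ≫ h = G.map h ≫ a := by
    conv_lhs => rw [hh]
    rw [← Category.assoc, hjz, Category.id_comp]
  have hkh : k₀ ≫ h = 𝟙 A := by
    refine uniqA _ _ ?_ (by simp)
    rw [← Category.assoc, hk₀, Category.assoc, hjh, G.map_comp, Category.assoc]
  refine ⟨⟨k₀, hhk, hkh⟩, ?_⟩
  intro a' haa' _ k hk
  rw [key a' haa' k hk]
  exact ⟨hhk, hkh⟩
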